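/- Let 0 < q < 1 and define \zeta[3] := \sum_{k=1}^\infty q^{2k}/[k]_q^3 and \zeta[2,1] := \sum_{k_1 > k_2 > 0} q^{k_1}/([k_1]_q^2 [k_2]_q). Then \zeta[2,1] = \zeta[3]. -/

import Mathlib

open Finset Filter Topology

noncomputable def qnum (q : ℝ) (k : ℕ) : ℝ := (1 - q ^ k) / (1 - q)

lemma qnum_pos {q : ℝ} (hq0 : 0 < q) (hq1 : q < 1) {k : ℕ} (hk : k ≠ 0) : 0 < qnum q k := by
  unfold qnum
  apply div_pos
  · have : q ^ k < 1 := pow_lt_one₀ hq0.le hq1 hk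
    linarith
  · linarith

lemma qnum_ne {q : ℝ} (hq0 : 0 < q) (hq1 : q < 1) {k : ℕ} (hk : k ≠ 0) : qnum q k ≠ 0 :=
  (qnum_pos hq0 hq1 hk).ne'

lemma qnum_add (q : ℝ) (hq1 : q < 1) (j k : ℕ) :
    qnum q (j + k) = qnum q j + q ^ j * qnum q k := by
  unfold qnum
  rw [pow_add]
  have h : (1 : ℝ) - q ≠ 0 := by linarith
  field_simp
  ring

lemma pf_identity {a b t : ℝ} (ha : a ≠ 0) (hb : b ≠ 0) (hc : a + t * b ≠ 0) :
    1 / (a ^ 2 * b) = t / (a ^ 2 * (a + t * b)) + 1 / ((a + t * b) ^ 2 * b)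
      + t / ((a + t * b) ^ 2 * a) := by
  rw [div_add_div _ _ (by positivity) (by positivity), div_add_div _ _ (by positivity) (by positivity), div_eq_div_iff (by positivity) (by positivity)]
  ring

lemma sum_reflect (N : ℕ) (F : ℕ → ℝ) :
    ∑ j ∈ Finset.Icc 1 N, F (N + 1 - j) = ∑ j ∈ Finset.Icc 1 N, F j := by
  apply Finset.sum_nbij' (fun j => N + 1 - j) (fun j => N + 1 - j) <;>
    simp (config := { contextual := true }) [Finset.mem_Icc] <;> omega

lemma step_lemma (q : ℝ) (hq0 : 0 < q) (hq1 : q < 1) (N : ℕ) :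
    (∑ j ∈ Icc 1 N, q ^ (N+1) / (qnum q (N+1) ^ 2 * qnum q j))
    + ∑ j ∈ Icc 1 N, q ^ (j + (N+1)) / (qnum q j ^ 2 * qnum q (N+1))
    - ∑ j ∈ Icc 1 N, q ^ (j + (N+1-j)) / (qnum q j ^ 2 * qnum q (N+1-j))
    + ∑ k ∈ Icc 1 (N+1), q ^ ((N+1) + k) / (qnum q (N+1) ^ 2 * qnum q k)
    = q ^ (2*(N+1)) / qnum q (N+1) ^ 3 := by
  have hrefl := sum_reflect N (fun j => q ^ (N+1) / (qnum q (N+1) ^ 2 * qnum q j))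
  have hper : ∀ j ∈ Icc 1 N,
      q ^ (j + (N+1-j)) / (qnum q j ^ 2 * qnum q (N+1-j))
      = q ^ ((N+1) + j) / (qnum q j ^ 2 * qnum q (N+1))
        + q ^ (N+1) / (qnum q (N+1) ^ 2 * qnum q (N+1-j))
        + q ^ ((N+1) + j) / (qnum q (N+1) ^ 2 * qnum q j) := by
    intro j hj
    simp only [Finset.mem_Icc] at hj
    have e1 : j + (N + 1 - j) = N + 1 := by omega
    have hM : qnum q (N+1) = qnum q j + q ^ j * qnum q (N+1-j) := by
      rw [← qnum_add q hq1 j (N+1-j)]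
      congr 1
      omega
    have ha := qnum_ne hq0 hq1 (show j ≠ 0 by omega)
    have hb := qnum_ne hq0 hq1 (show N+1-j ≠ 0 by omega)
    have hc : qnum q j + q ^ j * qnum q (N+1-j) ≠ 0 := by
      rw [← hM]; exact qnum_ne hq0 hq1 (by omega)
    have hpf := pf_identity (t := q ^ j) ha hb hc
    rw [e1, hM]
    linear_combination (q : ℝ) ^ (N+1) * hpf
  rw [Finset.sum_congr rfl hper]
  rw [Finset.sum_Icc_succ_top (show 1 ≤ N + 1 by omega)]
  have htop : q ^ ((N+1) + (N+1)) / (qnum q (N+1) ^ 2 * qnum q (N+1))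
      = q ^ (2*(N+1)) / qnum q (N+1) ^ 3 := by
    rw [two_mul]
    ring
  rw [htop]
  have hcomm : ∑ j ∈ Icc 1 N, q ^ (j + (N+1)) / (qnum q j ^ 2 * qnum q (N+1))
      = ∑ j ∈ Icc 1 N, q ^ ((N+1) + j) / (qnum q j ^ 2 * qnum q (N+1)) := by
    apply Finset.sum_congr rfl
    intro j _
    rw [Nat.add_comm]
  rw [hcomm]
  simp only [Finset.sum_add_distrib]
  rw [hrefl]
  ring

lemma key_identity (q : ℝ) (hq0 : 0 < q) (hq1 : q < 1) (N : ℕ) :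
    (∑ n ∈ Icc 1 N, ∑ j ∈ Ico 1 n, q ^ n / (qnum q n ^ 2 * qnum q j))
    + ∑ j ∈ Icc 1 N, ∑ k ∈ Icc (N+1-j) N, q ^ (j+k) / (qnum q j ^ 2 * qnum q k)
    = ∑ n ∈ Icc 1 N, q ^ (2*n) / qnum q n ^ 3 := by
  induction N with
  | zero => simp
  | succ N ih =>
    have hC : ∀ j ∈ Icc 1 N,
        (∑ k ∈ Icc (N+1+1-j) (N+1), q ^ (j+k) / (qnum q j ^ 2 * qnum q k))
        = (∑ k ∈ Icc (N+1-j) N, q ^ (j+k) / (qnum q j ^ 2 * qnum q k))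
          + q ^ (j+(N+1)) / (qnum q j ^ 2 * qnum q (N+1))
          - q ^ (j+(N+1-j)) / (qnum q j ^ 2 * qnum q (N+1-j)) := by
      intro j hj
      simp only [Finset.mem_Icc] at hj
      have h2 : N+1+1-j = (N+1-j)+1 := by omega
      rw [h2, Finset.sum_Icc_succ_top (show (N+1-j)+1 ≤ N+1 by omega)]
      have h3 : Finset.Icc (N+1-j) N = insert (N+1-j) (Finset.Icc ((N+1-j)+1) N) := by
        ext x
        simp only [Finset.mem_Icc, Finset.mem_insert]
        omega
      rw [h3, Finset.sum_insert (by simp only [Finset.mem_Icc]; omega)]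
      ring
    rw [Finset.sum_Icc_succ_top (show 1 ≤ N + 1 by omega),
        Finset.sum_Icc_succ_top (show 1 ≤ N + 1 by omega),
        Finset.sum_Icc_succ_top (show 1 ≤ N + 1 by omega)]
    rw [Finset.sum_congr rfl hC]
    simp only [Finset.sum_add_distrib, Finset.sum_sub_distrib]
    have hIco : Finset.Ico 1 (N+1) = Finset.Icc 1 N := Finset.Ico_add_one_right_eq_Icc 1 N
    rw [hIco]
    have hNN : N + 1 + 1 - (N+1) = 1 := by omega
    rw [hNN]
    have hstep := step_lemma q hq0 hq1 N
    linarith [ih, hstep]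

lemma one_le_qnum {q : ℝ} (hq0 : 0 < q) (hq1 : q < 1) {k : ℕ} (hk : 1 ≤ k) : 1 ≤ qnum q k := by
  unfold qnum
  rw [le_div_iff₀ (by linarith)]
  have : q ^ k ≤ q ^ 1 := pow_le_pow_of_le_one hq0.le hq1.le hk
  simp at this ⊢
  linarith


lemma sumT (q : ℝ) (N : ℕ) :
    ∑ x ∈ ((Icc 1 N ×ˢ Icc 1 N).subtype (fun p : ℕ × ℕ => p.2 < p.1 ∧ 0 < p.2)),
      q ^ (x : ℕ × ℕ).1 / (qnum q (x : ℕ × ℕ).1 ^ 2 * qnum q (x : ℕ × ℕ).2)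
    = ∑ n ∈ Icc 1 N, ∑ j ∈ Ico 1 n, q ^ n / (qnum q n ^ 2 * qnum q j) := by
  rw [Finset.sum_subtype_eq_sum_filter (fun p : ℕ × ℕ => q ^ p.1 / (qnum q p.1 ^ 2 * qnum q p.2))]
  rw [Finset.sum_filter, Finset.sum_product]
  apply Finset.sum_congr rfl
  intro n hn
  simp only [Finset.mem_Icc] at hn
  rw [← Finset.sum_filter]
  apply Finset.sum_congr ?_ (fun _ _ => rfl)
  ext j
  simp only [Finset.mem_filter, Finset.mem_Icc, Finset.mem_Ico]
  omega

lemma sumR (q : ℝ) (N : ℕ) :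
    ∑ i ∈ range N, q ^ (2*(i+1)) / qnum q (i+1) ^ 3
    = ∑ n ∈ Icc 1 N, q ^ (2*n) / qnum q n ^ 3 := by
  rw [← Finset.Ico_add_one_right_eq_Icc, Finset.sum_Ico_eq_sum_range]
  try simp only [Nat.add_sub_cancel]
  apply Finset.sum_congr rfl
  intro i _
  rw [Nat.add_comm 1 i]

theorem qzeta21_eq_qzeta3 (q : ℝ) (hq0 : 0 < q) (hq1 : q < 1) :
    (∑' p : {p : ℕ × ℕ // p.2 < p.1 ∧ 0 < p.2},
        q ^ p.1.1 / ((qnum q p.1.1) ^ 2 * qnum q p.1.2))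
      = ∑' k : ℕ+, q ^ (2 * (k : ℕ)) / (qnum q k) ^ 3 := by
  have h1q : (0:ℝ) < 1 - q := by linarith
  -- basic term bounds
  have hterm_nonneg : ∀ m a b : ℕ, a ≠ 0 → b ≠ 0 → 0 ≤ q ^ m / (qnum q a ^ 2 * qnum q b) := by
    intro m a b ha hb
    apply div_nonneg (pow_nonneg hq0.le m)
    exact le_of_lt (mul_pos (pow_pos (qnum_pos hq0 hq1 ha) 2) (qnum_pos hq0 hq1 hb))
  have hterm_le : ∀ m a b : ℕ, a ≠ 0 → b ≠ 0 → q ^ m / (qnum q a ^ 2 * qnum q b) ≤ q ^ m := by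
    intro m a b ha hb
    apply div_le_self (pow_nonneg hq0.le m)
    have h1 := one_le_qnum hq0 hq1 (Nat.one_le_iff_ne_zero.2 ha)
    have h2 := one_le_qnum hq0 hq1 (Nat.one_le_iff_ne_zero.2 hb)
    nlinarith
  -- names
  set f : {p : ℕ × ℕ // p.2 < p.1 ∧ 0 < p.2} → ℝ :=
    fun p => q ^ p.1.1 / ((qnum q p.1.1) ^ 2 * qnum q p.1.2) with hf
  set g : ℕ+ → ℝ := fun k => q ^ (2 * (k : ℕ)) / (qnum q k) ^ 3 with hg
  set L : ℕ → ℝ := fun N => ∑ n ∈ Icc 1 N, ∑ j ∈ Ico 1 n, q ^ n / (qnum q n ^ 2 * qnum q j)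
    with hL
  set C : ℕ → ℝ := fun N =>
    ∑ j ∈ Icc 1 N, ∑ k ∈ Icc (N+1-j) N, q ^ (j+k) / (qnum q j ^ 2 * qnum q k) with hC
  set R : ℕ → ℝ := fun N => ∑ n ∈ Icc 1 N, q ^ (2*n) / qnum q n ^ 3 with hR
  have hCnonneg : ∀ N, 0 ≤ C N := by
    intro N
    apply Finset.sum_nonneg
    intro j hj
    apply Finset.sum_nonneg
    intro k hk
    simp only [Finset.mem_Icc] at hj hk
    exact hterm_nonneg (j+k) j k (by omega) (by omega)
  have hkey : ∀ N, L N + C N = R N := fun N => key_identity q hq0 hq1 N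
  have hgeo : Summable (fun n : ℕ => q ^ n) := summable_geometric_of_lt_one hq0.le hq1
  set T : ℕ → Finset {p : ℕ × ℕ // p.2 < p.1 ∧ 0 < p.2} :=
    fun N => ((Icc 1 N ×ˢ Icc 1 N).subtype (fun p : ℕ × ℕ => p.2 < p.1 ∧ 0 < p.2)) with hT
  have hTsum : ∀ N, ∑ x ∈ T N, f x = L N := by
    intro N
    simp only [hT, hf, hL]
    exact sumT q N
  have hTmono : Monotone T := by
    intro a b hab x hx
    simp only [hT, Finset.mem_subtype, Finset.mem_product, Finset.mem_Icc] at *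
    omega
  have hTexh : ∀ x, ∃ N, x ∈ T N := by
    intro x
    refine ⟨x.1.1, ?_⟩
    have hx2 := x.2
    simp only [hT, Finset.mem_subtype, Finset.mem_product, Finset.mem_Icc]
    omega
  have hfnonneg : ∀ p, 0 ≤ f p := by
    intro p
    have hp := p.2
    exact hterm_nonneg _ _ _ (by omega) (by omega)
  have hRle : ∀ N, R N ≤ (1-q)⁻¹ := by
    intro N
    have hb : ∀ n ∈ Icc 1 N, q^(2*n)/qnum q n^3 ≤ q^n := by
      intro n hn
      simp only [Finset.mem_Icc] at hn
      calc q^(2*n)/qnum q n^3 ≤ q^(2*n) := by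
            apply div_le_self (pow_nonneg hq0.le _)
            exact one_le_pow₀ (one_le_qnum hq0 hq1 hn.1)
        _ ≤ q^n := pow_le_pow_of_le_one hq0.le hq1.le (by omega)
    calc R N ≤ ∑ n ∈ Icc 1 N, q^n := Finset.sum_le_sum hb
      _ ≤ ∑' n : ℕ, q^n := hgeo.sum_le_tsum _ (fun i _ => pow_nonneg hq0.le i)
      _ = (1-q)⁻¹ := tsum_geometric_of_lt_one hq0.le hq1
  have hLleR : ∀ N, L N ≤ R N := by
    intro N
    have h1 := hkey N
    have h2 := hCnonneg N
    linarith
  have hfsummable : Summable f := by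
    apply summable_of_sum_le hfnonneg
    intro u
    set N := u.sup (fun p => p.1.1) with hN
    have hsub : u ⊆ T N := by
      intro x hx
      have hx2 := x.2
      have hle : x.1.1 ≤ N := Finset.le_sup (f := fun p => p.1.1) hx
      simp only [hT, Finset.mem_subtype, Finset.mem_product, Finset.mem_Icc]
      omega
    calc ∑ x ∈ u, f x ≤ ∑ x ∈ T N, f x :=
          Finset.sum_le_sum_of_subset_of_nonneg hsub (fun i _ _ => hfnonneg i)
      _ = L N := hTsum N
      _ ≤ R N := hLleR N
      _ ≤ (1-q)⁻¹ := hRle N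
  have hTto : Tendsto T atTop atTop := tendsto_atTop_finset_of_monotone hTmono hTexh
  have hLto : Tendsto L atTop (𝓝 (∑' p, f p)) := by
    have h1 := (hfsummable.hasSum).comp hTto
    have h2 : ((fun s => ∑ i ∈ s, f i) ∘ T) = L := funext hTsum
    rwa [h2] at h1
  -- RHS
  have hgnonneg : ∀ k : ℕ+, 0 ≤ g k := by
    intro k
    apply div_nonneg (pow_nonneg hq0.le _)
    exact le_of_lt (pow_pos (qnum_pos hq0 hq1 k.ne_zero) 3)
  have hgsummable : Summable g := by
    apply Summable.of_nonneg_of_le hgnonneg (fun k => ?_)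
      (hgeo.comp_injective PNat.coe_injective)
    show g k ≤ q ^ (k : ℕ)
    calc g k ≤ q ^ (2 * (k : ℕ)) := by
          apply div_le_self (pow_nonneg hq0.le _)
          exact one_le_pow₀ (one_le_qnum hq0 hq1 k.one_le)
      _ ≤ q ^ (k : ℕ) := pow_le_pow_of_le_one hq0.le hq1.le (by omega)
  have hRto : Tendsto R atTop (𝓝 (∑' k, g k)) := by
    have h1 : HasSum (fun n : ℕ => g (Equiv.pnatEquivNat.symm n)) (∑' k, g k) := by
      rw [← Equiv.tsum_eq Equiv.pnatEquivNat.symm g]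
      exact (hgsummable.comp_injective (Equiv.pnatEquivNat.symm.injective)).hasSum
    have h2 := h1.tendsto_sum_nat
    have h3 : (fun N => ∑ i ∈ range N, g (Equiv.pnatEquivNat.symm i)) = R := by
      funext N
      rw [show (fun i : ℕ => g (Equiv.pnatEquivNat.symm i))
            = fun i : ℕ => q ^ (2*(i+1)) / qnum q (i+1) ^ 3 from ?_]
      · exact sumR q N
      · funext i
        rfl
    rwa [h3] at h2
  -- C → 0
  have hCle : ∀ N : ℕ, C N ≤ ((N:ℝ) ^ 2 * q ^ N) * q := by
    intro N
    have hin : ∀ j ∈ Icc 1 N,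
        ∑ k ∈ Icc (N+1-j) N, q^(j+k)/(qnum q j^2 * qnum q k) ≤ (N:ℝ) * q^(N+1) := by
      intro j hj
      simp only [Finset.mem_Icc] at hj
      have hb : ∀ k ∈ Icc (N+1-j) N, q^(j+k)/(qnum q j^2 * qnum q k) ≤ q^(N+1) := by
        intro k hk
        simp only [Finset.mem_Icc] at hk
        calc q^(j+k)/(qnum q j^2 * qnum q k) ≤ q^(j+k) :=
              hterm_le (j+k) j k (by omega) (by omega)
          _ ≤ q^(N+1) := pow_le_pow_of_le_one hq0.le hq1.le (by omega)
      calc ∑ k ∈ Icc (N+1-j) N, q^(j+k)/(qnum q j^2 * qnum q k)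
          ≤ (Icc (N+1-j) N).card • q^(N+1) := Finset.sum_le_card_nsmul _ _ _ hb
        _ = ((Icc (N+1-j) N).card : ℝ) * q^(N+1) := by rw [nsmul_eq_mul]
        _ ≤ (N:ℝ) * q^(N+1) := by
            apply mul_le_mul_of_nonneg_right _ (pow_nonneg hq0.le _)
            have hcard : (Icc (N+1-j) N).card ≤ N := by
              rw [Nat.card_Icc]
              omega
            exact_mod_cast hcard
    calc C N ≤ ∑ j ∈ Icc 1 N, (N:ℝ) * q^(N+1) := Finset.sum_le_sum hin
      _ = ((Icc 1 N).card : ℝ) * ((N:ℝ) * q^(N+1)) := by rw [Finset.sum_const, nsmul_eq_mul]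
      _ ≤ ((N:ℝ)^2 * q^N) * q := by
          rw [Nat.card_Icc]
          simp only [Nat.add_sub_cancel]
          rw [pow_succ]
          ring_nf
          nlinarith [pow_nonneg hq0.le N, sq_nonneg (N:ℝ)]
  have hCto : Tendsto C atTop (𝓝 0) := by
    have h1 := (tendsto_pow_const_mul_const_pow_of_lt_one 2 hq0.le hq1).mul_const q
    rw [zero_mul] at h1
    exact squeeze_zero hCnonneg hCle h1
  have hLto' : Tendsto L atTop (𝓝 (∑' k, g k - 0)) := by
    have h1 := hRto.sub hCto
    have h2 : (fun N => R N - C N) = L := by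
      funext N
      have := hkey N
      linarith
    rwa [h2] at h1
  rw [sub_zero] at hLto'
  exact tendsto_nhds_unique hLto hLto'
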